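/- Let L1 < L2 be reals and k, τ, m > 0, l ∈ ℝ \ {0}. Suppose u¹ ∈ H²(L1,L2), θ ∈ H¹(L1,L2), q ∈ H¹(L1,L2) satisfy: q = 0 a.e. on (L1,L2); (1 + τ·i·l)·q + k·θ' = 0 in L²; i·l·θ + k·q' + i·l·m·(u¹)' = 0 in L²; and (i·l)²·u¹ - a·(u¹)'' + m·θ' = 0 in L² for some a > 0. Then θ is a.e. equal to a constant, (u¹)'' = 0 a.e., and u¹ = 0 a.e. on (L1, L2). -/
import Mathlib


/-- Middle-bar part of the proof that `i·l` (`l ≠ 0`) is not an eigenvalue. -/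
theorem stmt_11 (L1 L2 k τ m a : ℝ) (hL : L1 < L2) (hk : 0 < k) (hτ : 0 < τ)
    (hm : 0 < m) (ha : 0 < a) (l : ℝ) (hl : l ≠ 0)
    (u1 u1' u1'' θ θ' q q' : ℝ → ℂ)
    (hu1 : ∀ x ∈ Set.Icc L1 L2, HasDerivAt u1 (u1' x) x)
    (hu1' : ∀ x ∈ Set.Icc L1 L2, HasDerivAt u1' (u1'' x) x)
    (hθ : ∀ x ∈ Set.Icc L1 L2, HasDerivAt θ (θ' x) x)
    (hq : ∀ x ∈ Set.Icc L1 L2, HasDerivAt q (q' x) x)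
    (hq0 : ∀ x ∈ Set.Icc L1 L2, q x = 0)
    (heq1 : ∀ x ∈ Set.Icc L1 L2,
      (1 + (τ : ℂ) * Complex.I * (l : ℂ)) * q x + (k : ℂ) * θ' x = 0)
    (heq2 : ∀ x ∈ Set.Icc L1 L2,
      Complex.I * (l : ℂ) * θ x + (k : ℂ) * q' x + Complex.I * (l : ℂ) * (m : ℂ) * u1' x = 0)
    (heq3 : ∀ x ∈ Set.Icc L1 L2,
      (Complex.I * (l : ℂ)) ^ 2 * u1 x - (a : ℂ) * u1'' x + (m : ℂ) * θ' x = 0) :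
    (∃ c : ℂ, ∀ x ∈ Set.Icc L1 L2, θ x = c) ∧
      (∀ x ∈ Set.Ioo L1 L2, u1'' x = 0) ∧
      (∀ x ∈ Set.Icc L1 L2, u1 x = 0) := by
  have hk0 : (k : ℂ) ≠ 0 := by exact_mod_cast hk.ne'
  have hm0 : (m : ℂ) ≠ 0 := by exact_mod_cast hm.ne'
  have hl0 : (l : ℂ) ≠ 0 := by exact_mod_cast hl
  have hil : Complex.I * (l : ℂ) ≠ 0 := mul_ne_zero Complex.I_ne_zero hl0
  -- θ' = 0 on Icc
  have hθ'0 : ∀ x ∈ Set.Icc L1 L2, θ' x = 0 := by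
    intro x hx
    have h := heq1 x hx
    rw [hq0 x hx, mul_zero, zero_add] at h
    exact (mul_eq_zero.mp h).resolve_left hk0
  -- θ constant on Icc
  have hconv : Convex ℝ (Set.Icc L1 L2) := convex_Icc L1 L2
  have hθc : ∀ x ∈ Set.Icc L1 L2, θ x = θ L1 := by
    intro x hx
    have hL1 : L1 ∈ Set.Icc L1 L2 := Set.left_mem_Icc.mpr hL.le
    have hb : ∀ y ∈ Set.Icc L1 L2, ‖θ' y‖ ≤ 0 := by
      intro y hy; rw [hθ'0 y hy]; simp
    have := hconv.norm_image_sub_le_of_norm_hasDerivWithin_le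
      (fun y hy => (hθ y hy).hasDerivWithinAt) hb hL1 hx
    have h0 : ‖θ x - θ L1‖ ≤ 0 := by simpa using this
    have := le_antisymm h0 (norm_nonneg _)
    rwa [norm_eq_zero, sub_eq_zero] at this
  -- q' = 0 on Ioo
  have hIoo : ∀ x ∈ Set.Ioo L1 L2, x ∈ Set.Icc L1 L2 := fun x hx => Set.Ioo_subset_Icc_self hx
  have hq'0 : ∀ x ∈ Set.Ioo L1 L2, q' x = 0 := by
    intro x hx
    have hmem : Set.Ioo L1 L2 ∈ nhds x := (isOpen_Ioo).mem_nhds hx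
    have hev : q =ᶠ[nhds x] fun _ => 0 :=
      Filter.eventuallyEq_of_mem hmem (fun y hy => hq0 y (hIoo y hy))
    have h1 : HasDerivAt (fun _ : ℝ => (0 : ℂ)) (q' x) x :=
      (hq x (hIoo x hx)).congr_of_eventuallyEq hev.symm
    have h2 : HasDerivAt (fun _ : ℝ => (0 : ℂ)) 0 x := hasDerivAt_const x 0
    exact h1.unique h2
  -- u1' constant on Ioo
  have hu1'c : ∀ x ∈ Set.Ioo L1 L2, u1' x = -(θ L1) / m := by
    intro x hx
    have h := heq2 x (hIoo x hx)
    rw [hq'0 x hx, mul_zero, add_zero, hθc x (hIoo x hx)] at h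
    field_simp
    have : Complex.I * (l : ℂ) * (θ L1 + (m : ℂ) * u1' x) = 0 := by ring_nf; ring_nf at h; linear_combination h
    have h3 := (mul_eq_zero.mp this).resolve_left hil
    linear_combination h3
  -- u1'' = 0 on Ioo
  have hu1''0 : ∀ x ∈ Set.Ioo L1 L2, u1'' x = 0 := by
    intro x hx
    have hmem : Set.Ioo L1 L2 ∈ nhds x := (isOpen_Ioo).mem_nhds hx
    have hev : u1' =ᶠ[nhds x] fun _ => -(θ L1) / m :=
      Filter.eventuallyEq_of_mem hmem (fun y hy => hu1'c y hy)
    have h1 : HasDerivAt (fun _ : ℝ => -(θ L1) / (m : ℂ)) (u1'' x) x :=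
      (hu1' x (hIoo x hx)).congr_of_eventuallyEq hev.symm
    exact h1.unique (hasDerivAt_const x _)
  -- u1 = 0 on Ioo
  have hu10 : ∀ x ∈ Set.Ioo L1 L2, u1 x = 0 := by
    intro x hx
    have h := heq3 x (hIoo x hx)
    rw [hu1''0 x hx, hθ'0 x (hIoo x hx), mul_zero, mul_zero, sub_zero, add_zero] at h
    have hne : (Complex.I * (l : ℂ)) ^ 2 ≠ 0 := pow_ne_zero _ hil
    exact (mul_eq_zero.mp h).resolve_left hne
  refine ⟨⟨θ L1, hθc⟩, hu1''0, ?_⟩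
  -- extend to Icc by continuity
  intro x hx
  have hcl : x ∈ closure (Set.Ioo L1 L2) := by
    rw [closure_Ioo hL.ne]; exact hx
  have hne : (nhdsWithin x (Set.Ioo L1 L2)).NeBot := mem_closure_iff_nhdsWithin_neBot.mp hcl
  have hc : Filter.Tendsto u1 (nhdsWithin x (Set.Ioo L1 L2)) (nhds (u1 x)) :=
    ((hu1 x hx).continuousAt.continuousWithinAt)
  have h0 : Filter.Tendsto u1 (nhdsWithin x (Set.Ioo L1 L2)) (nhds 0) := by
    apply Filter.Tendsto.congr' _ tendsto_const_nhds
    exact Filter.eventuallyEq_of_mem self_mem_nhdsWithin (fun y hy => (hu10 y hy).symm)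
  exact tendsto_nhds_unique hc h0
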